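/- For all n ≥ 1, m ≥ 2, and 0 ≤ ℓ ≤ m^n, the function q_{n,m} is monotone increasing in ℓ, satisfies k_{n,m}(ℓ) ≤ q_{n,m}(ℓ) ≤ k_{n,m}(ℓ) + 1, with q_{n,m}(0) = 0 = k_{n,m}(0) and q_{n,m}(m^n) = m = k_{n,m}(m^n). -/

import Mathlib

/-- `q n m ℓ = 1 + ⌊(ℓ-1)(m-1)/(mⁿ-1)⌋` for `ℓ ≥ 1`, and `q n m 0 = 0`. -/
def q (n m ℓ : ℕ) : ℕ := if ℓ = 0 then 0 else 1 + (ℓ - 1) * (m - 1) / (m ^ n - 1)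

/-- `k n m ℓ = ⌊ℓ / m^(n-1)⌋`. -/
def k (n m ℓ : ℕ) : ℕ := ℓ / m ^ (n - 1)

theorem stmt4 (n m : ℕ) (hn : 1 ≤ n) (hm : 2 ≤ m) :
    (∀ ℓ₁ ℓ₂, ℓ₁ ≤ ℓ₂ → ℓ₂ ≤ m ^ n → q n m ℓ₁ ≤ q n m ℓ₂) ∧
    (∀ ℓ, ℓ ≤ m ^ n → k n m ℓ ≤ q n m ℓ ∧ q n m ℓ ≤ k n m ℓ + 1) ∧
    q n m 0 = 0 ∧ k n m 0 = 0 ∧ q n m (m ^ n) = m ∧ k n m (m ^ n) = m := by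
  have hNpos : 0 < m ^ (n - 1) := Nat.pow_pos (by omega)
  have hMn : m ^ n = m ^ (n - 1) * m := by
    rw [← pow_succ]
    congr 1
    omega
  have hMpos : 2 ≤ m ^ n := le_trans hm (Nat.le_self_pow (by omega) m)
  have hDpos : 0 < m ^ n - 1 := by omega
  have hNm : 1 ≤ m ^ (n - 1) * m := Nat.one_le_iff_ne_zero.mpr (Nat.mul_ne_zero (by omega) (by omega))
  refine ⟨?_, ?_, ?_, ?_, ?_, ?_⟩
  · -- monotonicity
    intro ℓ₁ ℓ₂ h _
    unfold q
    by_cases h1 : ℓ₁ = 0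
    · simp [h1]
    · have h2 : ℓ₂ ≠ 0 := by omega
      simp only [h1, h2, if_false]
      gcongr <;> omega
  · -- bounds
    intro ℓ hℓ
    by_cases h0 : ℓ = 0
    · simp [h0, q, k]
    · have hℓ1 : 1 ≤ ℓ := by omega
      unfold q k
      simp only [h0, if_false]
      constructor
      · -- k ≤ q
        rcases Nat.eq_zero_or_pos (ℓ / m ^ (n - 1)) with hy0 | hy1
        · rw [hy0]; exact Nat.zero_le _
        · set y := ℓ / m ^ (n - 1) with hy
          have hyN : y * m ^ (n - 1) ≤ ℓ := Nat.div_mul_le_self ℓ _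
          have hym : y ≤ m := by
            have := Nat.div_le_div_right (c := m ^ (n - 1)) hℓ
            rwa [hMn, Nat.mul_div_cancel_left m hNpos] at this
          have hyN' : (y : ℤ) * (m : ℤ) ^ (n - 1) ≤ (ℓ : ℤ) := by exact_mod_cast hyN
          have hym' : (y : ℤ) ≤ (m : ℤ) := by exact_mod_cast hym
          have hy1' : (1 : ℤ) ≤ (y : ℤ) := by exact_mod_cast hy1
          have hN1' : (1 : ℤ) ≤ (m : ℤ) ^ (n - 1) := by exact_mod_cast hNpos
          have hm' : (2 : ℤ) ≤ (m : ℤ) := by exact_mod_cast hm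
          have hℓ1' : (1 : ℤ) ≤ (ℓ : ℤ) := by exact_mod_cast hℓ1
          have key : (y - 1) * (m ^ n - 1) ≤ (ℓ - 1) * (m - 1) := by
            rw [hMn]
            zify [hℓ1, hy1, (by omega : 1 ≤ m), hNm]
            nlinarith [mul_nonneg (by linarith : (0:ℤ) ≤ (m:ℤ)^(n-1) - 1)
                (by linarith : (0:ℤ) ≤ (m:ℤ) - (y:ℤ)),
              mul_nonneg (by linarith : (0:ℤ) ≤ (ℓ:ℤ) - (y:ℤ) * (m:ℤ)^(n-1))
                (by linarith : (0:ℤ) ≤ (m:ℤ) - 1)]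
          have h2 := (Nat.le_div_iff_mul_le hDpos).mpr key
          omega
      · -- q ≤ k + 1
        have h1 : (ℓ - 1) * (m - 1) / (m ^ n - 1) ≤ ℓ / m ^ (n - 1) := by
          rw [Nat.le_div_iff_mul_le hNpos]
          set x := (ℓ - 1) * (m - 1) / (m ^ n - 1) with hx
          have hxD : x * (m ^ n - 1) ≤ (ℓ - 1) * (m - 1) :=
            Nat.div_mul_le_self _ _
          have hA : (ℓ - 1) * (m - 1) * m ^ (n - 1) ≤ ℓ * (m ^ n - 1) := by
            have hN1' : (1 : ℤ) ≤ (m : ℤ) ^ (n - 1) := by exact_mod_cast hNpos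
            have hm' : (2 : ℤ) ≤ (m : ℤ) := by exact_mod_cast hm
            have hℓ1' : (1 : ℤ) ≤ (ℓ : ℤ) := by exact_mod_cast hℓ1
            rw [hMn]
            zify [hℓ1, (by omega : 1 ≤ m), hNm]
            nlinarith [mul_nonneg (by linarith : (0:ℤ) ≤ (ℓ:ℤ) - 1)
                (by linarith : (0:ℤ) ≤ (m:ℤ)^(n-1) - 1),
              mul_nonneg (by linarith : (0:ℤ) ≤ (m:ℤ)^(n-1))
                (by linarith : (0:ℤ) ≤ (m:ℤ) - 1)]
          have h3 : x * m ^ (n - 1) * (m ^ n - 1) ≤ ℓ * (m ^ n - 1) := by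
            calc x * m ^ (n - 1) * (m ^ n - 1) = x * (m ^ n - 1) * m ^ (n - 1) := by ring
              _ ≤ (ℓ - 1) * (m - 1) * m ^ (n - 1) := Nat.mul_le_mul_right _ hxD
              _ ≤ ℓ * (m ^ n - 1) := hA
          exact Nat.le_of_mul_le_mul_right h3 hDpos
        omega
  · simp [q]
  · simp [k]
  · have hne : m ^ n ≠ 0 := by omega
    simp only [q, hne, if_false]
    rw [Nat.mul_div_cancel_left (m - 1) hDpos]
    omega
  · unfold k
    rw [hMn, Nat.mul_div_cancel_left m hNpos]
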